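/- Let f : ℝ → ℝ be Lipschitz continuous and for σ > 0 let f_σ(t) = f(σt). For every r ∈ ℕ there exist δ > 0 and C > 0 such that for all σ > 0 with |σ − 1| ≤ δ one has |ζ_r(f_σ) − σ^r·(ζ_r(f) + √((r+1)(r+2))·(σ−1)·ζ_{r+2}(f))| ≤ C·(σ−1)². In particular there exists C' > 0 with |ζ_r(f_σ) − σ^r·ζ_r(f)| ≤ C'·|σ−1| for all σ with |σ − 1| ≤ δ. -/

import Mathlib

open MeasureTheory ProbabilityTheory Filter
open scoped NNReal
open Polynomial Finset

noncomputable def hermiteP : ℕ → ℝ → ℝ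
  | 0 => fun _ => 1
  | (r+1) => fun t => t * hermiteP r t - deriv (hermiteP r) t

/-- The normalized Hermite polynomials `ĥ_r = h_r / √(r!)`. -/
noncomputable def hermiteN (r : ℕ) (t : ℝ) : ℝ := hermiteP r t / Real.sqrt (Nat.factorial r)

/-- The `r`-th Hermite coefficient `ζ_r(f) = ∫ f·ĥ_r dγ` of `f` w.r.t. the
standard Gaussian measure. -/
noncomputable def zeta (f : ℝ → ℝ) (r : ℕ) : ℝ :=
  ∫ t, f t * hermiteN r t ∂(gaussianReal 0 1)

/-- Hermite polynomials as `Polynomial ℝ`. -/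
noncomputable def HP : ℕ → Polynomial ℝ
  | 0 => 1
  | (r+1) => X * HP r - derivative (HP r)

lemma HP_succ (r : ℕ) : HP (r+1) = X * HP r - derivative (HP r) := rfl

lemma derivative_HP (r : ℕ) : derivative (HP (r+1)) = C ((r:ℝ)+1) * HP r := by
  induction r with
  | zero => simp [HP]
  | succ n ih =>
    rw [HP_succ (n+1), derivative_sub, derivative_mul, derivative_X, ih, derivative_mul,
      derivative_C, HP_succ n]
    push_cast [C_add, C_1]
    ring

lemma hermiteP_eq (r : ℕ) : hermiteP r = fun t => (HP r).eval t := by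
  induction r with
  | zero => simp [hermiteP, HP]
  | succ n ih =>
    funext t
    show t * hermiteP n t - deriv (hermiteP n) t = _
    rw [ih, HP_succ]
    simp [Polynomial.deriv]

lemma hermiteN_eq (r : ℕ) (t : ℝ) :
    hermiteN r t = (HP r).eval t / Real.sqrt (Nat.factorial r) := by
  rw [hermiteN, hermiteP_eq]

/-- Key polynomial identity. -/
lemma HP_key (r : ℕ) :
    X^2 * HP r - X * derivative (HP r) - HP r = HP (r+2) + C (r:ℝ) * HP r := by
  have h2 : HP (r+2) = X * HP (r+1) - derivative (HP (r+1)) := rfl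
  rw [h2, derivative_HP, HP_succ]
  push_cast [C_add, C_1]
  ring

/-- `Gg p v = p(v) e^{-v²/2}`. -/
noncomputable def Gg (p : Polynomial ℝ) (v : ℝ) : ℝ := p.eval v * Real.exp (-(v^2)/2)

noncomputable def Dp (p : Polynomial ℝ) : Polynomial ℝ := derivative p - X * p

lemma hasDerivAt_Gg (p : Polynomial ℝ) (v : ℝ) : HasDerivAt (Gg p) (Gg (Dp p) v) v := by
  have h1 : HasDerivAt (fun v : ℝ => -(v^2)/2) (-v) v := by
    have := ((hasDerivAt_pow 2 v).neg).div_const 2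
    simpa using this.congr_deriv (by ring)
  have h2 := (h1.exp)
  have h3 := (p.hasDerivAt v).mul h2
  have : HasDerivAt (Gg p) (((derivative p).eval v) * Real.exp (-(v^2)/2)
      + p.eval v * (Real.exp (-(v^2)/2) * -v)) v := h3
  convert this using 1
  simp [Gg, Dp]
  ring

lemma hasDerivAt_div_const_comp (s σ : ℝ) (hσ : σ ≠ 0) :
    HasDerivAt (fun x : ℝ => s / x) (-(s / σ^2)) σ := by
  have := (hasDerivAt_inv hσ).const_mul s
  simpa [div_eq_mul_inv, neg_div, mul_div_assoc] using this

lemma hasDerivAt_Gg_comp (p : Polynomial ℝ) (s σ : ℝ) (hσ : σ ≠ 0) :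
    HasDerivAt (fun x => Gg p (s / x)) (Gg (Dp p) (s/σ) * (-(s / σ^2))) σ :=
  (hasDerivAt_Gg p (s/σ)).comp σ (hasDerivAt_div_const_comp s σ hσ)

section K
variable (p : Polynomial ℝ)

/-- kernel and its σ-derivatives -/
noncomputable def K0 (p : Polynomial ℝ) (s σ : ℝ) : ℝ := σ⁻¹ * Gg p (s / σ)
noncomputable def Q1 (p : Polynomial ℝ) : Polynomial ℝ := p + X * Dp p
noncomputable def K1 (p : Polynomial ℝ) (s σ : ℝ) : ℝ := -(σ⁻¹^2 * Gg (Q1 p) (s / σ))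
noncomputable def Q2 (p : Polynomial ℝ) : Polynomial ℝ := C 2 * Q1 p + X * Dp (Q1 p)
noncomputable def K2 (p : Polynomial ℝ) (s σ : ℝ) : ℝ := σ⁻¹^3 * Gg (Q2 p) (s / σ)

lemma hasDerivAt_K0 (s σ : ℝ) (hσ : σ ≠ 0) :
    HasDerivAt (fun x => K0 p s x) (K1 p s σ) σ := by
  have h := ((hasDerivAt_inv hσ).mul (hasDerivAt_Gg_comp p s σ hσ))
  refine h.congr_deriv ?_
  symm
  simp only [K1, Q1, Gg, eval_add, eval_mul, eval_X]
  field_simp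
  ring

lemma hasDerivAt_K1 (s σ : ℝ) (hσ : σ ≠ 0) :
    HasDerivAt (fun x => K1 p s x) (K2 p s σ) σ := by
  have hinv2 : HasDerivAt (fun x : ℝ => x⁻¹^2) (2 * σ⁻¹ ^ 1 * -(σ^2)⁻¹) σ := by
    have h0 := (hasDerivAt_pow 2 (σ⁻¹)).comp σ (hasDerivAt_inv hσ)
    exact h0.congr_deriv (by norm_num)
  have h := ((hinv2.mul (hasDerivAt_Gg_comp (Q1 p) s σ hσ)).neg)
  refine h.congr_deriv ?_
  symm
  simp only [K2, Q2, Gg, eval_add, eval_mul, eval_X, eval_C]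
  field_simp
  ring
end K

lemma pow_le_factorial_mul_exp {x : ℝ} (hx : 0 ≤ x) (n : ℕ) :
    x ^ n ≤ n.factorial * Real.exp x := by
  have h := Real.sum_le_exp_of_nonneg hx (n+1)
  have h2 : x ^ n / n.factorial ≤ Real.exp x := by
    refine le_trans ?_ h
    exact Finset.single_le_sum (f := fun i => x ^ i / i.factorial)
      (fun i _ => by positivity) (Finset.self_mem_range_succ n)
  calc x ^ n = n.factorial * (x ^ n / n.factorial) := by
        field_simp
    _ ≤ n.factorial * Real.exp x := by
        have : (0:ℝ) < n.factorial := by positivity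
        nlinarith
lemma abs_pow_le_exp_sq (v : ℝ) (n : ℕ) :
    |v| ^ n ≤ ((4:ℝ) ^ n * n.factorial + 1) * Real.exp (v^2/4) := by
  have hexp : (1:ℝ) ≤ Real.exp (v^2/4) := Real.one_le_exp (by positivity)
  rcases le_or_gt (|v|) 1 with h | h
  · have h1 : |v| ^ n ≤ 1 := pow_le_one₀ (abs_nonneg v) h
    have h00 : (0:ℝ) ≤ (4:ℝ) ^ n * n.factorial := by positivity
    have hA : (1:ℝ) ≤ (4:ℝ) ^ n * n.factorial + 1 := by linarith
    calc |v| ^ n ≤ 1 := h1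
      _ ≤ 1 * Real.exp (v^2/4) := by simpa using hexp
      _ ≤ ((4:ℝ) ^ n * n.factorial + 1) * Real.exp (v^2/4) :=
          mul_le_mul_of_nonneg_right hA (Real.exp_pos _).le
  · have h1 : |v| ^ n ≤ (v^2) ^ n := by
      apply pow_le_pow_left₀ (abs_nonneg v)
      nlinarith [abs_nonneg v, sq_abs v]
    have h2 : (v^2) ^ n = 4 ^ n * (v^2/4) ^ n := by
      rw [div_pow, mul_div_cancel₀]
      positivity
    have h3 : (v^2/4) ^ n ≤ n.factorial * Real.exp (v^2/4) :=
      pow_le_factorial_mul_exp (by positivity) n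
    have h4 : (0:ℝ) < 4 ^ n := by positivity
    nlinarith

lemma poly_growth (p : Polynomial ℝ) :
    ∃ M : ℝ, 0 < M ∧ ∀ v : ℝ, |p.eval v| ≤ M * Real.exp (v^2/4) := by
  set n := p.natDegree
  refine ⟨∑ i ∈ Finset.range (n+1), |p.coeff i| * ((4:ℝ) ^ i * i.factorial + 1) + 1,
    by positivity, fun v => ?_⟩
  have h0 : |p.eval v| ≤ ∑ i ∈ Finset.range (n+1), |p.coeff i| * |v| ^ i := by
    rw [Polynomial.eval_eq_sum_range]
    refine le_trans (Finset.abs_sum_le_sum_abs _ _) ?_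
    simp [abs_mul, abs_pow, le_refl]
    exact le_rfl
  have hexp : (0:ℝ) < Real.exp (v^2/4) := Real.exp_pos _
  have h1 : ∑ i ∈ Finset.range (n+1), |p.coeff i| * |v| ^ i
      ≤ (∑ i ∈ Finset.range (n+1), |p.coeff i| * ((4:ℝ) ^ i * i.factorial + 1))
        * Real.exp (v^2/4) := by
    rw [Finset.sum_mul]
    refine Finset.sum_le_sum fun i _ => ?_
    have := abs_pow_le_exp_sq v i
    have h2 : (0:ℝ) ≤ |p.coeff i| := abs_nonneg _
    calc |p.coeff i| * |v| ^ i ≤ |p.coeff i| * (((4:ℝ) ^ i * i.factorial + 1) * Real.exp (v^2/4)) :=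
          mul_le_mul_of_nonneg_left this h2
      _ = |p.coeff i| * ((4:ℝ) ^ i * i.factorial + 1) * Real.exp (v^2/4) := by ring
  refine le_trans h0 (le_trans h1 ?_)
  have : (0:ℝ) < Real.exp (v^2/4) := hexp
  nlinarith [Finset.sum_nonneg (fun i (_ : i ∈ Finset.range (n+1)) =>
    mul_nonneg (abs_nonneg (p.coeff i)) (by positivity : (0:ℝ) ≤ (4:ℝ) ^ i * i.factorial + 1))]

lemma Gg_div_bound (p : Polynomial ℝ) : ∃ M : ℝ, 0 < M ∧ ∀ s x : ℝ,
    x ∈ Set.Icc (1/2:ℝ) (3/2) → |Gg p (s/x)| ≤ M * Real.exp (-(s^2)/9) := by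
  obtain ⟨M, hM, h⟩ := poly_growth p
  refine ⟨M, hM, fun s x hx => ?_⟩
  have hx0 : (0:ℝ) < x := lt_of_lt_of_le (by norm_num) hx.1
  set v := s/x with hv
  have hv2 : s^2 * (4/9) ≤ v^2 := by
    have hxx : x^2 ≤ 9/4 := by nlinarith [hx.2, hx0.le]
    have hveq : v^2 = s^2 / x^2 := by rw [hv, div_pow]
    rw [hveq, show s^2 * (4/9) = s^2 / (9/4) by ring]
    exact div_le_div_of_nonneg_left (sq_nonneg s) (by positivity) hxx
  calc |Gg p v| = |p.eval v| * Real.exp (-(v^2)/2) := by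
        rw [Gg, abs_mul, abs_of_pos (Real.exp_pos _)]
    _ ≤ M * Real.exp (v^2/4) * Real.exp (-(v^2)/2) :=
        mul_le_mul_of_nonneg_right (h v) (Real.exp_pos _).le
    _ = M * Real.exp (v^2/4 + -(v^2)/2) := by rw [Real.exp_add]; ring
    _ ≤ M * Real.exp (-(s^2)/9) := by
        refine mul_le_mul_of_nonneg_left (Real.exp_le_exp.mpr (by nlinarith)) hM.le

lemma K_bound (p : Polynomial ℝ) (k : ℕ) (hk : k ≤ 3) : ∃ M : ℝ, 0 < M ∧ ∀ s x : ℝ,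
    x ∈ Set.Icc (1/2:ℝ) (3/2) → |x⁻¹^k * Gg p (s/x)| ≤ M * Real.exp (-(s^2)/9) := by
  obtain ⟨M, hM, h⟩ := Gg_div_bound p
  refine ⟨8*M, by positivity, fun s x hx => ?_⟩
  have hx0 : (0:ℝ) < x := lt_of_lt_of_le (by norm_num) hx.1
  have hxi : x⁻¹ ≤ 2 := by
    have h1 := inv_mul_cancel₀ (ne_of_gt hx0)
    nlinarith [inv_pos.mpr hx0, hx.1]
  have habs : |x⁻¹^k| ≤ 8 := by
    rw [abs_pow]
    calc |x⁻¹|^k ≤ 2^k := by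
          refine pow_le_pow_left₀ (abs_nonneg _) ?_ k
          rw [abs_of_pos (inv_pos.mpr hx0)]; exact hxi
      _ ≤ 2^3 := pow_le_pow_right₀ (by norm_num) hk
      _ = 8 := by norm_num
  rw [abs_mul]
  calc |x⁻¹^k| * |Gg p (s/x)| ≤ 8 * (M * Real.exp (-(s^2)/9)) :=
        mul_le_mul habs (h s x hx) (abs_nonneg _) (by norm_num)
    _ = 8*M*Real.exp (-(s^2)/9) := by ring

lemma integrable_linear_gauss (a b : ℝ) :
    Integrable (fun s : ℝ => (a + b * |s|) * Real.exp (-(s^2)/9)) := by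
  have h1 : Integrable (fun s : ℝ => Real.exp (-(1/9:ℝ) * s^2)) :=
    integrable_exp_neg_mul_sq (by norm_num)
  have h2 : Integrable (fun s : ℝ => s * Real.exp (-(1/9:ℝ)*s^2)) :=
    integrable_mul_exp_neg_mul_sq (by norm_num)
  have h2' : Integrable (fun s : ℝ => |s| * Real.exp (-(1/9:ℝ)*s^2)) := by
    have := h2.abs
    simpa [abs_mul, abs_of_pos (Real.exp_pos _)] using this
  have heq : (fun s : ℝ => (a + b*|s|) * Real.exp (-(s^2)/9))
      = fun s => a * Real.exp (-(1/9:ℝ)*s^2) + b * (|s| * Real.exp (-(1/9:ℝ)*s^2)) := by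
    funext s
    rw [show -(s^2)/9 = -(1/9:ℝ)*s^2 by ring]
    ring
  rw [heq]
  exact (h1.const_mul a).add (h2'.const_mul b)


/-- First-order MVT bound on `[1/2, 3/2]`. -/
lemma taylor1 {g g' : ℝ → ℝ} {σ M : ℝ} (hσ : σ ∈ Set.Icc (1/2:ℝ) (3/2))
    (hg : ∀ x ∈ Set.Icc (1/2:ℝ) (3/2), HasDerivAt g (g' x) x)
    (hM : ∀ x ∈ Set.Icc (1/2:ℝ) (3/2), |g' x| ≤ M) :
    |g σ - g 1| ≤ M * |σ - 1| := by
  have h1 : (1:ℝ) ∈ Set.Icc (1/2:ℝ) (3/2) := by norm_num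
  have := (convex_Icc (1/2:ℝ) (3/2)).norm_image_sub_le_of_norm_hasDerivWithin_le
    (f := g) (f' := g') (fun x hx => (hg x hx).hasDerivWithinAt)
    (fun x hx => hM x hx) h1 hσ
  simpa [Real.norm_eq_abs] using this

/-- Second-order Taylor bound at 1 on `[1/2, 3/2]`. -/
lemma taylor2 {g g' : ℝ → ℝ} {σ M : ℝ} (hσ : σ ∈ Set.Icc (1/2:ℝ) (3/2))
    (hg : ∀ x ∈ Set.Icc (1/2:ℝ) (3/2), HasDerivAt g (g' x) x)
    (hM : ∀ x ∈ Set.Icc (1/2:ℝ) (3/2), |g' x - g' 1| ≤ M * |x - 1|) :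
    |g σ - g 1 - g' 1 * (σ - 1)| ≤ M * (σ - 1)^2 := by
  have h1 : (1:ℝ) ∈ Set.Icc (1/2:ℝ) (3/2) := by norm_num
  have hsub : Set.uIcc (1:ℝ) σ ⊆ Set.Icc (1/2:ℝ) (3/2) := Set.uIcc_subset_Icc h1 hσ
  have hM0 : 0 ≤ M := by
    have h3 := hM (3/2) (by norm_num)
    have h4 := abs_nonneg (g' (3/2) - g' 1)
    have h5 : |(3/2:ℝ) - 1| = 1/2 := by norm_num
    rw [h5] at h3
    linarith
  set h : ℝ → ℝ := fun x => g x - g' 1 * x with hh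
  have hd : ∀ x ∈ Set.uIcc (1:ℝ) σ, HasDerivWithinAt h (g' x - g' 1) (Set.uIcc (1:ℝ) σ) x := by
    intro x hx
    exact (((hg x (hsub hx)).sub ((hasDerivAt_id x).const_mul (g' 1))).congr_deriv
      (by ring)).hasDerivWithinAt
  have hbound : ∀ x ∈ Set.uIcc (1:ℝ) σ, ‖g' x - g' 1‖ ≤ M * |σ - 1| := by
    intro x hx
    refine (hM x (hsub hx)).trans (mul_le_mul_of_nonneg_left ?_ hM0)
    rcases le_total 1 σ with hc | hc
    · rw [Set.uIcc_of_le hc] at hx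
      rw [abs_of_nonneg (by linarith [hx.1]), abs_of_nonneg (by linarith)]
      linarith [hx.2]
    · rw [Set.uIcc_of_ge hc] at hx
      rw [abs_of_nonpos (by linarith [hx.2]), abs_of_nonpos (by linarith)]
      linarith [hx.1]
  have := (convex_uIcc (1:ℝ) σ).norm_image_sub_le_of_norm_hasDerivWithin_le
    hd hbound Set.left_mem_uIcc Set.right_mem_uIcc
  have h2 : |h σ - h 1| ≤ M * |σ - 1| * |σ - 1| := by
    simpa [Real.norm_eq_abs] using this
  calc |g σ - g 1 - g' 1 * (σ - 1)| = |h σ - h 1| := by rw [hh]; ring_nf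
    _ ≤ M * |σ - 1| * |σ - 1| := h2
    _ = M * (σ-1)^2 := by rw [mul_assoc, ← abs_mul, ← sq, abs_of_nonneg (sq_nonneg _)]
section ZetaRep

lemma gphi (t : ℝ) :
    gaussianPDFReal 0 1 t = (Real.sqrt (2*Real.pi))⁻¹ * Real.exp (-(t^2)/2) := by
  simp [gaussianPDFReal]

lemma zeta_lebesgue (g : ℝ → ℝ) (r : ℕ) :
    zeta g r = ∫ t, g t * hermiteN r t * gaussianPDFReal 0 1 t := by
  rw [zeta, gaussianReal_of_var_ne_zero 0 one_ne_zero]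
  have hd : gaussianPDF 0 1 = fun x => ((Real.toNNReal (gaussianPDFReal 0 1 x) : ℝ≥0) : ENNReal) := by
    funext x
    rw [gaussianPDF_def]
    rfl
  rw [hd, integral_withDensity_eq_integral_smul
    (Measurable.real_toNNReal (measurable_gaussianPDFReal 0 1)) _]
  congr 1; funext t
  rw [NNReal.smul_def, smul_eq_mul, Real.coe_toNNReal _ (gaussianPDFReal_nonneg 0 1 t)]
  ring

lemma zeta_rep (f : ℝ → ℝ) (r : ℕ) (σ : ℝ) (hσ : 0 < σ) :
    zeta (fun t => f (σ * t)) r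
      = (Real.sqrt (Nat.factorial r) * Real.sqrt (2*Real.pi))⁻¹
        * ∫ s, f s * K0 (HP r) s σ := by
  rw [zeta_lebesgue]
  have hfac : (0:ℝ) < Real.sqrt (Nat.factorial r) := by
    apply Real.sqrt_pos.mpr
    exact_mod_cast (Nat.factorial_pos r)
  have hpi : (0:ℝ) < Real.sqrt (2*Real.pi) := Real.sqrt_pos.mpr (by positivity)
  have h1 : ∀ t : ℝ, f (σ * t) * hermiteN r t * gaussianPDFReal 0 1 t
      = (Real.sqrt (Nat.factorial r) * Real.sqrt (2*Real.pi))⁻¹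
        * ((fun s => f s * Gg (HP r) (s/σ)) (σ * t)) := by
    intro t
    have hst : (σ * t)/σ = t := by field_simp
    rw [hermiteN_eq, gphi]
    simp only [hst, Gg]
    field_simp
  simp_rw [h1]
  rw [MeasureTheory.integral_const_mul]
  rw [MeasureTheory.Measure.integral_comp_mul_left (fun s => f s * Gg (HP r) (s/σ)) σ]
  rw [abs_of_pos (inv_pos.mpr hσ), smul_eq_mul]
  congr 1
  rw [← MeasureTheory.integral_const_mul]
  congr 1; funext s
  rw [K0]
  ring

lemma zeta_rep_one (f : ℝ → ℝ) (r : ℕ) :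
    zeta f r
      = (Real.sqrt (Nat.factorial r) * Real.sqrt (2*Real.pi))⁻¹
        * ∫ s, f s * Gg (HP r) s := by
  have h := zeta_rep f r 1 one_pos
  have h2 : (fun t => f (1 * t)) = f := by funext t; rw [one_mul]
  rw [h2] at h
  rw [h]
  simp [K0]

end ZetaRep
lemma continuous_Gg (p : Polynomial ℝ) : Continuous (Gg p) := by
  unfold Gg
  exact p.continuous.mul (Real.continuous_exp.comp (by continuity))

lemma integrable_f_mul (f : ℝ → ℝ) (hfc : Continuous f) (a b : ℝ)
    (hb : ∀ s, |f s| ≤ a + b * |s|) (g : ℝ → ℝ) (hgc : Continuous g) (M : ℝ)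
    (hg : ∀ s, |g s| ≤ M * Real.exp (-(s^2)/9)) :
    Integrable (fun s => f s * g s) := by
  refine ((integrable_linear_gauss a b).const_mul M).mono'
    ((hfc.mul hgc).aestronglyMeasurable) (ae_of_all _ fun s => ?_)
  have h1 : (0:ℝ) ≤ a + b*|s| := le_trans (abs_nonneg _) (hb s)
  rw [Real.norm_eq_abs, abs_mul]
  calc |f s| * |g s| ≤ (a + b*|s|) * (M * Real.exp (-(s^2)/9)) :=
        mul_le_mul (hb s) (hg s) (abs_nonneg _) h1
    _ = M * ((a + b*|s|) * Real.exp (-(s^2)/9)) := by ring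


lemma K1_at_one' (r : ℕ) (s : ℝ) :
    K1 (HP r) s 1 = Gg (HP (r+2)) s + (r:ℝ) * Gg (HP r) s := by
  have hq : Q1 (HP r) = -(HP (r+2) + C (r:ℝ) * HP r) := by
    rw [Q1, Dp, ← HP_key r]
    ring
  rw [K1, hq]
  simp [Gg]
  ring

lemma sqrt_fac (r : ℕ) : Real.sqrt ((r+2).factorial)
    = Real.sqrt (((r:ℝ)+1)*((r:ℝ)+2)) * Real.sqrt (r.factorial) := by
  rw [← Real.sqrt_mul (by positivity)]
  congr 1
  rw [show r + 2 = (r+1) + 1 from rfl, Nat.factorial_succ, Nat.factorial_succ]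
  push_cast
  ring
set_option maxHeartbeats 2000000

theorem stmt_3 (f : ℝ → ℝ) (hf : ∃ L, LipschitzWith L f) (r : ℕ) :
    ∃ δ > (0:ℝ), ∃ C > (0:ℝ),
      (∀ σ : ℝ, 0 < σ → |σ - 1| ≤ δ →
        |zeta (fun t => f (σ * t)) r -
            σ ^ r * (zeta f r +
              Real.sqrt (((r:ℝ) + 1) * ((r:ℝ) + 2)) * (σ - 1) * zeta f (r + 2))|
          ≤ C * (σ - 1) ^ 2) ∧
      ∃ C' > (0:ℝ), ∀ σ : ℝ, 0 < σ → |σ - 1| ≤ δ →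
        |zeta (fun t => f (σ * t)) r - σ ^ r * zeta f r| ≤ C' * |σ - 1| := by
  obtain ⟨L, hL⟩ := hf
  have hfc : Continuous f := hL.continuous
  have hfb : ∀ s : ℝ, |f s| ≤ |f 0| + (L:ℝ) * |s| := by
    intro s
    have h1 := hL.dist_le_mul s 0
    rw [Real.dist_eq, Real.dist_eq, sub_zero] at h1
    calc |f s| = |(f s - f 0) + f 0| := by ring_nf
      _ ≤ |f s - f 0| + |f 0| := abs_add_le _ _
      _ ≤ (L:ℝ)* |s| + |f 0| := by linarith
      _ = |f 0| + (L:ℝ)* |s| := by ring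
  set P0 := HP r with hP0
  obtain ⟨M0, hM0pos, hbK0⟩ := K_bound P0 1 (by norm_num)
  obtain ⟨M2, hM2pos, hbK2⟩ := K_bound (Q2 P0) 3 (by norm_num)
  obtain ⟨M1, hM1pos, hbK1⟩ := K_bound (Q1 P0) 2 (by norm_num)
  obtain ⟨M3, hM3pos, hbK3⟩ := K_bound (HP (r+2)) 1 (by norm_num)
  have h1mem : (1:ℝ) ∈ Set.Icc (1/2:ℝ) (3/2) := by norm_num
  have hK0b : ∀ (s x : ℝ), x ∈ Set.Icc (1/2:ℝ) (3/2) →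
      |K0 P0 s x| ≤ M0 * Real.exp (-(s^2)/9) := by
    intro s x hx
    have h := hbK0 s x hx
    rw [pow_one] at h
    simpa [K0] using h
  have hK1b : ∀ (s x : ℝ), x ∈ Set.Icc (1/2:ℝ) (3/2) →
      |K1 P0 s x| ≤ M1 * Real.exp (-(s^2)/9) := by
    intro s x hx
    have h := hbK1 s x hx
    simpa [K1, abs_neg] using h
  -- integrability facts
  have hcontK0 : ∀ x : ℝ, Continuous (fun s => K0 P0 s x) := by
    intro x
    exact continuous_const.mul ((continuous_Gg P0).comp (continuous_id.div_const x))
  have hintK0 : ∀ x ∈ Set.Icc (1/2:ℝ) (3/2), Integrable (fun s => f s * K0 P0 s x) := by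
    intro x hx
    exact integrable_f_mul f hfc _ _ hfb _ (hcontK0 x) M0 (fun s => hK0b s x hx)
  have hcontK1 : Continuous (fun s => K1 P0 s 1) :=
    (continuous_const.mul ((continuous_Gg (Q1 P0)).comp (continuous_id.div_const 1))).neg
  have hintK1 : Integrable (fun s => f s * K1 P0 s 1) :=
    integrable_f_mul f hfc _ _ hfb _ hcontK1 M1 (fun s => hK1b s 1 h1mem)
  have hintG2 : Integrable (fun s => f s * Gg (HP (r+2)) s) := by
    refine integrable_f_mul f hfc _ _ hfb _ (continuous_Gg _) M3 (fun s => ?_)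
    have h := hbK3 s 1 h1mem
    simpa using h
  have hintG0 : Integrable (fun s => f s * Gg P0 s) := by
    refine integrable_f_mul f hfc _ _ hfb _ (continuous_Gg _) M0 (fun s => ?_)
    have h := hbK0 s 1 h1mem
    simpa using h
  -- second order Taylor bound for the kernel
  have hTay : ∀ (s : ℝ), ∀ x ∈ Set.Icc (1/2:ℝ) (3/2),
      |K0 P0 s x - K0 P0 s 1 - K1 P0 s 1 * (x - 1)|
        ≤ (M2 * Real.exp (-(s^2)/9)) * (x-1)^2 := by
    intro s x hx
    refine taylor2 hx (fun y hy => hasDerivAt_K0 P0 s y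
      (ne_of_gt (lt_of_lt_of_le (by norm_num) hy.1))) ?_
    intro y hy
    refine taylor1 hy (fun z hz => hasDerivAt_K1 P0 s z
      (ne_of_gt (lt_of_lt_of_le (by norm_num) hz.1))) ?_
    intro z hz
    have h := hbK2 s z hz
    simpa [K2] using h
  set c0 : ℝ := (Real.sqrt (Nat.factorial r) * Real.sqrt (2*Real.pi))⁻¹ with hc0
  have hfacpos : (0:ℝ) < Real.sqrt (Nat.factorial r) := by
    apply Real.sqrt_pos.mpr
    exact_mod_cast Nat.factorial_pos r
  have hpipos : (0:ℝ) < Real.sqrt (2*Real.pi) := Real.sqrt_pos.mpr (by positivity)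
  have hc0pos : 0 < c0 := by rw [hc0]; positivity
  set c : ℝ := Real.sqrt (((r:ℝ)+1) * ((r:ℝ)+2)) with hc
  have hcpos : 0 < c := Real.sqrt_pos.mpr (by positivity)
  set J : ℝ → ℝ := fun x => ∫ s, f s * K0 P0 s x with hJ
  set Λ : ℝ := ∫ s, f s * K1 P0 s 1 with hΛdef
  set IW : ℝ := ∫ s, (|f 0| + (L:ℝ)* |s|) * Real.exp (-(s^2)/9) with hIW
  have hIWnn : 0 ≤ IW := by
    rw [hIW]
    refine integral_nonneg fun s => mul_nonneg ?_ (Real.exp_pos _).le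
    exact le_trans (abs_nonneg (f s)) (hfb s)
  set ζ0 : ℝ := zeta f r with hζ0def
  set ζ2 : ℝ := zeta f (r+2) with hζ2def
  -- representation
  have hZ : ∀ σ : ℝ, 0 < σ → zeta (fun t => f (σ*t)) r = c0 * J σ := by
    intro σ h
    rw [zeta_rep f r σ h]
  have hJ1 : J 1 = ∫ s, f s * Gg P0 s := by
    rw [hJ]
    simp [K0]
  have h1 : ζ0 = c0 * J 1 := by
    rw [hζ0def, zeta_rep_one f r, hJ1]
  have h2 : c0 * Λ = (r:ℝ) * ζ0 + c * ζ2 := by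
    have hsplit : (fun s => f s * K1 P0 s 1)
        = fun s => f s * Gg (HP (r+2)) s + (r:ℝ) * (f s * Gg P0 s) := by
      funext s
      rw [hP0, K1_at_one']
      ring
    set A : ℝ := ∫ s, f s * Gg (HP (r+2)) s with hA
    have hstep : c0 * Λ = c0 * A + (r:ℝ) * (c0 * J 1) := by
      rw [hΛdef, hsplit, integral_add hintG2 (hintG0.const_mul _),
        MeasureTheory.integral_const_mul, hJ1, hA]
      ring
    have hζ2A : c * ζ2 = c0 * A := by
      rw [hζ2def, zeta_rep_one f (r+2), sqrt_fac r, ← hc, ← hA, hc0]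
      rw [show (c * Real.sqrt (r.factorial) * Real.sqrt (2*Real.pi))⁻¹
          = c⁻¹ * (Real.sqrt (r.factorial) * Real.sqrt (2*Real.pi))⁻¹ by
        rw [← mul_inv, mul_assoc]]
      rw [← mul_assoc, ← mul_assoc, mul_inv_cancel₀ (ne_of_gt hcpos)]
      ring
    rw [hstep, hζ2A, h1]
    ring
  -- main integral estimate
  have hJest : ∀ x ∈ Set.Icc (1/2:ℝ) (3/2),
      |J x - J 1 - Λ * (x-1)| ≤ (M2 * IW) * (x-1)^2 := by
    intro x hx
    have hi1 := hintK0 x hx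
    have hi2 := hintK0 1 h1mem
    have heq : J x - J 1 - Λ * (x-1)
        = ∫ s, f s * (K0 P0 s x - K0 P0 s 1 - K1 P0 s 1 * (x-1)) := by
      have i3 : Integrable (fun s => f s * K1 P0 s 1 * (x-1)) := hintK1.mul_const (x-1)
      have e1 : ∫ s, ((f s * K0 P0 s x - f s * K0 P0 s 1) - f s * K1 P0 s 1 * (x-1))
          = (∫ s, (f s * K0 P0 s x - f s * K0 P0 s 1)) - ∫ s, f s * K1 P0 s 1 * (x-1) :=
        integral_sub (hi1.sub hi2) i3
      have e2 : ∫ s, (f s * K0 P0 s x - f s * K0 P0 s 1)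
          = (∫ s, f s * K0 P0 s x) - ∫ s, f s * K0 P0 s 1 := integral_sub hi1 hi2
      have e3 : ∫ s, f s * K1 P0 s 1 * (x-1)
          = (∫ s, f s * K1 P0 s 1) * (x-1) :=
        MeasureTheory.integral_mul_const (x-1) (fun s => f s * K1 P0 s 1)
      have e4 : ∫ s, ((f s * K0 P0 s x - f s * K0 P0 s 1) - f s * K1 P0 s 1 * (x-1))
          = ∫ s, f s * (K0 P0 s x - K0 P0 s 1 - K1 P0 s 1 * (x-1)) := by
        congr 1
        funext s
        ring
      rw [← e4, e1, e2, e3, hJ, hΛdef]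
    rw [heq]
    have hIb : Integrable (fun s => (M2*(x-1)^2)
        * ((|f 0| + (L:ℝ)* |s|) * Real.exp (-(s^2)/9))) :=
      (integrable_linear_gauss _ _).const_mul _
    rw [← Real.norm_eq_abs]
    refine le_trans (norm_integral_le_of_norm_le hIb (ae_of_all _ fun s => ?_)) ?_
    · rw [Real.norm_eq_abs, abs_mul]
      have hnn : (0:ℝ) ≤ |f 0| + (L:ℝ)* |s| := le_trans (abs_nonneg (f s)) (hfb s)
      calc |f s| * |K0 P0 s x - K0 P0 s 1 - K1 P0 s 1 * (x-1)|
          ≤ (|f 0| + (L:ℝ)* |s|) * ((M2 * Real.exp (-(s^2)/9)) * (x-1)^2) :=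
            mul_le_mul (hfb s) (hTay s x hx) (abs_nonneg _) hnn
        _ = (M2*(x-1)^2) * ((|f 0| + (L:ℝ)* |s|) * Real.exp (-(s^2)/9)) := by ring
    · rw [MeasureTheory.integral_const_mul, ← hIW]
      exact le_of_eq (by ring)
  -- power function Taylor bounds
  have habs2 : ∀ x ∈ Set.Icc (1/2:ℝ) (3/2), ∀ k : ℕ, |x^k| ≤ 2^k := by
    intro x hx k
    rw [abs_pow]
    refine pow_le_pow_left₀ (abs_nonneg x) ?_ k
    rw [abs_le]
    constructor <;> nlinarith [hx.1, hx.2]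
  set Cp1 : ℝ := (r:ℝ) * 2^r + 1 with hCp1
  have hCp1pos : 0 < Cp1 := by rw [hCp1]; positivity
  set Cp2 : ℝ := (r:ℝ) * ((r:ℝ) * 2^r) + 1 with hCp2
  have hCp2pos : 0 < Cp2 := by rw [hCp2]; positivity
  have hpowbd : ∀ y ∈ Set.Icc (1/2:ℝ) (3/2), ∀ k : ℕ, |(k:ℝ) * y^(k-1)| ≤ (k:ℝ) * 2^k := by
    intro y hy k
    rw [abs_mul, Nat.abs_cast]
    refine mul_le_mul_of_nonneg_left ?_ (Nat.cast_nonneg k)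
    refine le_trans (habs2 y hy (k-1)) ?_
    exact pow_le_pow_right₀ (by norm_num) (Nat.sub_le k 1)
  have hp1 : ∀ x ∈ Set.Icc (1/2:ℝ) (3/2), |x^r - 1| ≤ Cp1 * |x-1| := by
    intro x hx
    have ht := taylor1 (g := fun y => y^r) (g' := fun y => (r:ℝ)*y^(r-1)) (M := Cp1) hx
      (fun y _ => by simpa using hasDerivAt_pow r y)
      (fun y hy => le_trans (hpowbd y hy r) (by rw [hCp1]; linarith))
    simpa using ht
  have hp2 : ∀ x ∈ Set.Icc (1/2:ℝ) (3/2), |x^r - 1 - (r:ℝ)*(x-1)| ≤ Cp2 * (x-1)^2 := by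
    intro x hx
    have inner : ∀ y ∈ Set.Icc (1/2:ℝ) (3/2),
        |(r:ℝ)*y^(r-1) - (r:ℝ)*(1:ℝ)^(r-1)| ≤ Cp2 * |y-1| := by
      intro y hy
      refine taylor1 (g := fun z => (r:ℝ)*z^(r-1))
        (g' := fun z => (r:ℝ)*(((r-1:ℕ):ℝ)*z^(r-1-1))) (M := Cp2) hy
        (fun z _ => (hasDerivAt_pow (r-1) z).const_mul (r:ℝ)) ?_
      intro z hz
      have hb := hpowbd z hz (r-1)
      have hr1 : ((r-1:ℕ):ℝ) ≤ (r:ℝ) := by exact_mod_cast Nat.sub_le r 1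
      have hpw : (2:ℝ)^(r-1) ≤ 2^r := pow_le_pow_right₀ (by norm_num) (Nat.sub_le r 1)
      have habs : |((r-1:ℕ):ℝ)*z^(r-1-1)| ≤ (r:ℝ) * 2^r := by
        refine le_trans hb ?_
        have h2 : (0:ℝ) ≤ ((r-1:ℕ):ℝ) := Nat.cast_nonneg _
        have h3 : (0:ℝ) < (2:ℝ)^(r-1) := by positivity
        nlinarith [Nat.cast_nonneg (α := ℝ) r]
      rw [abs_mul, Nat.abs_cast]
      calc (r:ℝ) * |((r-1:ℕ):ℝ)*z^(r-1-1)| ≤ (r:ℝ) * ((r:ℝ)*2^r) :=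
            mul_le_mul_of_nonneg_left habs (Nat.cast_nonneg r)
        _ ≤ Cp2 := by rw [hCp2]; linarith
    have ht := taylor2 (g := fun y => y^r) (g' := fun y => (r:ℝ)*y^(r-1)) (M := Cp2) hx
      (fun y _ => by simpa using hasDerivAt_pow r y) inner
    simpa using ht
  -- the key algebraic identity
  have hkey : ∀ σ : ℝ, 0 < σ →
      zeta (fun t => f (σ*t)) r - σ^r * (ζ0 + c*(σ-1)*ζ2)
      = c0*(J σ - J 1 - Λ*(σ-1)) - ζ0*(σ^r - 1 - (r:ℝ)*(σ-1))
        - (c*ζ2*(σ-1))*(σ^r - 1) := by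
    intro σ hσpos
    have hzz := hZ σ hσpos
    linear_combination hzz - h1 + (σ-1) * h2
  have tri : ∀ a b d : ℝ, |a - b - d| ≤ |a| + |b| + |d| := by
    intro a b d
    have h1' := abs_add_le (a - b) (-d)
    have h2' := abs_add_le a (-b)
    rw [abs_neg] at h1' h2'
    rw [show a - b - d = (a - b) + -d from by ring] at *
    calc |a - b + -d| ≤ |a - b| + |d| := h1'
      _ ≤ |a| + |b| + |d| := by rw [show a - b = a + -b from by ring]; linarith
  set CC : ℝ := c0 * (M2 * IW) + |ζ0| * Cp2 + c * |ζ2| * Cp1 + 1 with hCC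
  have hCCpos : 0 < CC := by
    rw [hCC]
    have e1 : 0 ≤ c0 * (M2 * IW) := mul_nonneg hc0pos.le (mul_nonneg hM2pos.le hIWnn)
    have e2 : 0 ≤ |ζ0| * Cp2 := mul_nonneg (abs_nonneg _) hCp2pos.le
    have e3 : 0 ≤ c * |ζ2| * Cp1 := mul_nonneg (mul_nonneg hcpos.le (abs_nonneg _)) hCp1pos.le
    linarith
  have hmain : ∀ σ : ℝ, 0 < σ → |σ - 1| ≤ 1/2 →
      |zeta (fun t => f (σ * t)) r - σ ^ r * (ζ0 + c * (σ - 1) * ζ2)| ≤ CC * (σ - 1) ^ 2 := by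
    intro σ hσpos hδ
    obtain ⟨hd1, hd2⟩ := abs_le.mp hδ
    have hσIcc : σ ∈ Set.Icc (1/2:ℝ) (3/2) := ⟨by linarith, by linarith⟩
    have hsq : |σ-1| * |σ-1| = (σ-1)^2 := by rw [abs_mul_abs_self]; ring
    have t1 : |c0 * (J σ - J 1 - Λ*(σ-1))| ≤ c0 * ((M2*IW)*(σ-1)^2) := by
      rw [abs_mul, abs_of_pos hc0pos]
      exact mul_le_mul_of_nonneg_left (hJest σ hσIcc) hc0pos.le
    have t2 : |ζ0 * (σ^r - 1 - (r:ℝ)*(σ-1))| ≤ |ζ0| * (Cp2*(σ-1)^2) := by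
      rw [abs_mul]
      exact mul_le_mul_of_nonneg_left (hp2 σ hσIcc) (abs_nonneg _)
    have t3 : |(c*ζ2*(σ-1))*(σ^r - 1)| ≤ (c* |ζ2|) * (Cp1 * (σ-1)^2) := by
      rw [abs_mul, abs_mul, abs_mul, abs_of_pos hcpos]
      calc c * |ζ2| * |σ-1| * |σ^r-1| ≤ c * |ζ2| * |σ-1| * (Cp1 * |σ-1|) := by
            refine mul_le_mul_of_nonneg_left (hp1 σ hσIcc) ?_
            positivity
        _ = (c* |ζ2|) * (Cp1 * (|σ-1| * |σ-1|)) := by ring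
        _ = (c* |ζ2|) * (Cp1 * (σ-1)^2) := by rw [hsq]
    calc |zeta (fun t => f (σ * t)) r - σ ^ r * (ζ0 + c * (σ - 1) * ζ2)|
        = |c0*(J σ - J 1 - Λ*(σ-1)) - ζ0*(σ^r - 1 - (r:ℝ)*(σ-1))
            - (c*ζ2*(σ-1))*(σ^r - 1)| := by rw [hkey σ hσpos]
      _ ≤ |c0*(J σ - J 1 - Λ*(σ-1))| + |ζ0*(σ^r - 1 - (r:ℝ)*(σ-1))|
            + |(c*ζ2*(σ-1))*(σ^r - 1)| := tri _ _ _
      _ ≤ c0 * ((M2*IW)*(σ-1)^2) + |ζ0| * (Cp2*(σ-1)^2) + (c* |ζ2|) * (Cp1 * (σ-1)^2) := by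
            linarith
      _ ≤ CC * (σ - 1)^2 := by
            rw [hCC]
            have hexp : (c0*(M2*IW) + |ζ0| *Cp2 + c* |ζ2| *Cp1 + 1) * (σ-1)^2
                - (c0*((M2*IW)*(σ-1)^2) + |ζ0| *(Cp2*(σ-1)^2) + (c* |ζ2|)*(Cp1*(σ-1)^2))
                = (σ-1)^2 := by ring
            linarith [sq_nonneg (σ-1), hexp]
  refine ⟨1/2, by norm_num, CC, hCCpos, hmain, ?_⟩
  refine ⟨CC + 2^r * (c * |ζ2|) + 1, ?_, ?_⟩
  · have e3 : 0 ≤ 2^r * (c * |ζ2|) := by positivity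
    linarith
  intro σ hσpos hδ
  obtain ⟨hd1, hd2⟩ := abs_le.mp hδ
  have hσIcc : σ ∈ Set.Icc (1/2:ℝ) (3/2) := ⟨by linarith, by linarith⟩
  have h2r := habs2 σ hσIcc r
  have hm := hmain σ hσpos hδ
  have hsplit2 : zeta (fun t => f (σ * t)) r - σ ^ r * ζ0
      = (zeta (fun t => f (σ * t)) r - σ ^ r * (ζ0 + c * (σ - 1) * ζ2))
        + σ^r * (c * (σ-1) * ζ2) := by ring
  have habs3 : |σ^r * (c * (σ-1) * ζ2)| ≤ 2^r * (c * |ζ2|) * |σ-1| := by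
    rw [abs_mul, abs_mul, abs_mul, abs_of_pos hcpos]
    calc |σ^r| * (c * |σ-1| * |ζ2|) ≤ 2^r * (c * |σ-1| * |ζ2|) := by
          refine mul_le_mul_of_nonneg_right h2r ?_
          positivity
      _ = 2^r * (c * |ζ2|) * |σ-1| := by ring
  have hsq2 : (σ-1)^2 ≤ |σ-1| := by
    have : (σ-1)^2 = |σ-1| * |σ-1| := by rw [abs_mul_abs_self]; ring
    rw [this]
    nlinarith [abs_nonneg (σ-1)]
  calc |zeta (fun t => f (σ * t)) r - σ ^ r * ζ0|
      ≤ |zeta (fun t => f (σ * t)) r - σ ^ r * (ζ0 + c * (σ - 1) * ζ2)|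
        + |σ^r * (c * (σ-1) * ζ2)| := by rw [hsplit2]; exact abs_add_le _ _
    _ ≤ CC * (σ-1)^2 + 2^r * (c * |ζ2|) * |σ-1| := by linarith
    _ ≤ (CC + 2^r * (c * |ζ2|) + 1) * |σ-1| := by
        have e1 : CC * (σ-1)^2 ≤ CC * |σ-1| := mul_le_mul_of_nonneg_left hsq2 hCCpos.le
        have e2 : (CC + 2^r * (c * |ζ2|) + 1) * |σ-1|
            = CC * |σ-1| + 2^r * (c * |ζ2|) * |σ-1| + |σ-1| := by ring
        linarith [abs_nonneg (σ-1), e1, e2]
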